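/- Fundamental theorem of logical relations for IKC: given an IKC term Δ ⊢ t : A, a substitution Γ ⊢ˢ s : Δ, and an environment δ : ⟦Δ⟧_Γ in the IKC NbE model, if LR_Δ(s, δ) holds then LR_A(subst s t, ⟦t⟧ δ) holds. -/

import Mathlib

namespace IKC

/-- Types of the Fitch-style calculus: base type ι, functions, box. -/
inductive Ty : Type
  | base : Ty
  | arr : Ty → Ty → Ty
  | box : Ty → Ty

/-- Typing contexts: empty, extension by a type, extension by a lock 🔒. -/
inductive Cx : Type
  | nil : Cx
  | snoc : Cx → Ty → Cx
  | lock : Cx → Cx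

/-- IKC modal accessibility relation Δ ◁ Γ: Γ = Δ,🔒,Δ' with Δ' lock-free. -/
inductive Ext : Cx → Cx → Type
  | nil : Ext Γ (.lock Γ)
  | var : Ext Δ Γ → Ext Δ (.snoc Γ A)

/-- Order-preserving embeddings Γ ≤ Γ'. -/
inductive Ope : Cx → Cx → Type
  | base : Ope .nil .nil
  | drop : Ope Γ Γ' → Ope Γ (.snoc Γ' A)
  | keep : Ope Γ Γ' → Ope (.snoc Γ A) (.snoc Γ' A)
  | keepLock : Ope Γ Γ' → Ope (.lock Γ) (.lock Γ')

/-- Identity OPE. -/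
def idOpe : (Γ : Cx) → Ope Γ Γ
  | .nil => .base
  | .snoc Γ _ => .keep (idOpe Γ)
  | .lock Γ => .keepLock (idOpe Γ)

/-- De Bruijn variables (no rule through locks). -/
inductive Var : Cx → Ty → Type
  | zero : Var (.snoc Γ A) A
  | succ : Var Γ A → Var (.snoc Γ B) A

/-- Intrinsically-typed terms of IKC. -/
inductive Tm : Cx → Ty → Type
  | var : Var Γ A → Tm Γ A
  | lam : Tm (.snoc Γ A) B → Tm Γ (.arr A B)
  | app : Tm Γ (.arr A B) → Tm Γ A → Tm Γ B
  | box : Tm (.lock Γ) A → Tm Γ (.box A)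
  | unbox : Tm Δ (.box A) → Ext Δ Γ → Tm Γ A

/-- Factorization of e : Δ ◁ Γ along an OPE o : Γ ≤ Γ'. -/
def factor : {Δ Γ Γ' : Cx} → Ext Δ Γ → Ope Γ Γ' → (Δ' : Cx) × Ope Δ Δ' × Ext Δ' Γ'
  | _, _, _, e, .drop o =>
    let f := factor e o
    ⟨f.1, f.2.1, .var f.2.2⟩
  | _, _, _, .nil, .keepLock o => ⟨_, o, .nil⟩
  | _, _, _, .var e, .keep o =>
    let f := factor e o
    ⟨f.1, f.2.1, .var f.2.2⟩

/-- An accessibility proof e : Δ ◁ Γ yields an OPE Δ,🔒 ≤ Γ. -/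
def factorOpe : {Δ Γ : Cx} → Ext Δ Γ → Ope (.lock Δ) Γ
  | _, _, .nil => idOpe _
  | _, _, .var e => .drop (factorOpe e)

/-- Weakening of variables along an OPE. -/
def wkVar : {Γ Γ' : Cx} → Ope Γ Γ' → Var Γ A → Var Γ' A
  | _, _, .drop o, v => .succ (wkVar o v)
  | _, _, .keep _, .zero => .zero
  | _, _, .keep o, .succ v => .succ (wkVar o v)

/-- Weakening (renaming) of terms along an OPE. -/
def wkTm : {Γ Γ' : Cx} → Ope Γ Γ' → Tm Γ A → Tm Γ' A
  | _, _, o, .var v => .var (wkVar o v)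
  | _, _, o, .lam t => .lam (wkTm (.keep o) t)
  | _, _, o, .app t u => .app (wkTm o t) (wkTm o u)
  | _, _, o, .box t => .box (wkTm (.keepLock o) t)
  | _, _, o, .unbox t e => .unbox (wkTm (factor e o).2.1 t) (factor e o).2.2

/-- Substitutions Γ ⊢ˢ s : Δ. -/
inductive Sub : Cx → Cx → Type
  | empty : Sub Γ .nil
  | snoc : Sub Γ Δ → Tm Γ A → Sub Γ (.snoc Δ A)
  | lock : Sub Θ Δ → Ext Θ Γ → Sub Γ (.lock Δ)

/-- Weakening of substitutions along an OPE. -/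
def wkSub : {Γ Γ' Δ : Cx} → Ope Γ Γ' → Sub Γ Δ → Sub Γ' Δ
  | _, _, _, _, .empty => .empty
  | _, _, _, o, .snoc s t => .snoc (wkSub o s) (wkTm o t)
  | _, _, _, o, .lock s e => .lock (wkSub (factor e o).2.1 s) (factor e o).2.2

/-- Identity substitution. -/
def idSub : (Γ : Cx) → Sub Γ Γ
  | .nil => .empty
  | .snoc Γ _ => .snoc (wkSub (.drop (idOpe Γ)) (idSub Γ)) (.var .zero)
  | .lock Γ => .lock (idSub Γ) .nil

/-- Action of a substitution on a variable. -/
def substVar : {Γ Δ : Cx} → Sub Γ Δ → Var Δ A → Tm Γ A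
  | _, _, .snoc _ t, .zero => t
  | _, _, .snoc s _, .succ v => substVar s v

/-- Trimming a substitution along the modal accessibility relation. -/
def trimSub : {Γ Δ Θ : Cx} → Sub Γ Δ → Ext Θ Δ → (Θ' : Cx) × Sub Θ' Θ × Ext Θ' Γ
  | _, _, _, .lock s e, .nil => ⟨_, s, e⟩
  | _, _, _, .snoc s _, .var e => trimSub s e

/-- Application of a substitution to a term. -/
def subst : {Γ Δ : Cx} → Sub Γ Δ → Tm Δ A → Tm Γ A
  | _, _, s, .var v => substVar s v
  | _, _, s, .lam t => .lam (subst (.snoc (wkSub (.drop (idOpe _)) s) (.var .zero)) t)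
  | _, _, s, .app t u => .app (subst s t) (subst s u)
  | _, _, s, .box t => .box (subst (.lock s .nil) t)
  | _, _, s, .unbox t e => .unbox (subst (trimSub s e).2.1 t) (trimSub s e).2.2

/-- The equational theory ≈ of IKC. -/
inductive Conv : {Γ : Cx} → {A : Ty} → Tm Γ A → Tm Γ A → Prop
  | refl (t : Tm Γ A) : Conv t t
  | symm : Conv t u → Conv u t
  | trans : Conv t u → Conv u v → Conv t v
  | congLam : Conv t t' → Conv (.lam t) (.lam t')
  | congApp : Conv t t' → Conv u u' → Conv (.app t u) (.app t' u')
  | congBox : Conv t t' → Conv (.box t) (.box t')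
  | congUnbox {t t' : Tm Δ (.box A)} {e : Ext Δ Γ} :
      Conv t t' → Conv (.unbox t e) (.unbox t' e)
  | betaFun (t : Tm (.snoc Γ A) B) (u : Tm Γ A) :
      Conv (.app (.lam t) u) (subst (.snoc (idSub Γ) u) t)
  | etaFun (t : Tm Γ (.arr A B)) :
      Conv t (.lam (.app (wkTm (.drop (idOpe Γ)) t) (.var .zero)))
  | betaBox (t : Tm (.lock Δ) A) (e : Ext Δ Γ) :
      Conv (.unbox (.box t) e) (wkTm (factorOpe e) t)
  | etaBox (t : Tm Γ (.box A)) :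
      Conv t (.box (.unbox t .nil))

end IKC

namespace IKC

mutual
/-- Normal forms of IKC. -/
inductive Nf : Cx → Ty → Type
  | up : Ne Γ .base → Nf Γ .base
  | lam : Nf (.snoc Γ A) B → Nf Γ (.arr A B)
  | box : Nf (.lock Γ) A → Nf Γ (.box A)
/-- Neutral elements of IKC. -/
inductive Ne : Cx → Ty → Type
  | var : Var Γ A → Ne Γ A
  | app : Ne Γ (.arr A B) → Nf Γ A → Ne Γ B
  | unbox : Ne Δ (.box A) → Ext Δ Γ → Ne Γ A
end

/-- Composition of OPEs. -/
def compOpe : {Γ Γ' Γ'' : Cx} → Ope Γ Γ' → Ope Γ' Γ'' → Ope Γ Γ''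
  | _, _, _, o, .drop p => .drop (compOpe o p)
  | _, _, _, .drop o, .keep p => .drop (compOpe o p)
  | _, _, _, .keep o, .keep p => .keep (compOpe o p)
  | _, _, _, .keepLock o, .keepLock p => .keepLock (compOpe o p)
  | _, _, _, .base, .base => .base

mutual
/-- Weakening of normal forms along an OPE. -/
def wkNf : {Γ Γ' : Cx} → {A : Ty} → Ope Γ Γ' → Nf Γ A → Nf Γ' A
  | _, _, _, o, .up n => .up (wkNe o n)
  | _, _, _, o, .lam n => .lam (wkNf (.keep o) n)
  | _, _, _, o, .box n => .box (wkNf (.keepLock o) n)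
/-- Weakening of neutral elements along an OPE. -/
def wkNe : {Γ Γ' : Cx} → {A : Ty} → Ope Γ Γ' → Ne Γ A → Ne Γ' A
  | _, _, _, o, .var v => .var (wkVar o v)
  | _, _, _, o, .app n m => .app (wkNe o n) (wkNf o m)
  | _, _, _, o, .unbox n e => .unbox (wkNe (factor e o).2.1 n) (factor e o).2.2
end

/-- Interpretation of types in the NbE model (worlds are contexts, ≤ is given
by OPEs, R by the modal accessibility relation ◁, and the valuation of the
base type by neutral elements). -/
def SemTy : Ty → Cx → Type
  | .base, Γ => Ne Γ .base
  | .arr A B, Γ => ∀ Γ', Ope Γ Γ' → SemTy A Γ' → SemTy B Γ'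
  | .box A, Γ => ∀ Γ', Ope Γ Γ' → ∀ Δ, Ext Γ' Δ → SemTy A Δ

/-- Interpretation of contexts in the NbE model. -/
def SemCx : Cx → Cx → Type
  | .nil, _ => PUnit
  | .snoc Γ A, Δ => SemCx Γ Δ × SemTy A Δ
  | .lock Γ, Δ => (Θ : Cx) × SemCx Γ Θ × Ext Θ Δ

/-- Monotonicity for the NbE interpretation of types. -/
def wkSemTy : (A : Ty) → {Δ Δ' : Cx} → Ope Δ Δ' → SemTy A Δ → SemTy A Δ'
  | .base, _, _, o, n => wkNe o n
  | .arr _ _, _, _, o, f => fun Γ'' o' a => f Γ'' (compOpe o o') a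
  | .box _, _, _, o, b => fun Γ'' o' Θ e => b Γ'' (compOpe o o') Θ e

/-- Monotonicity for the NbE interpretation of contexts. -/
def wkSemCx : (Γ : Cx) → {Δ Δ' : Cx} → Ope Δ Δ' → SemCx Γ Δ → SemCx Γ Δ'
  | .nil, _, _, _, _ => PUnit.unit
  | .snoc Γ A, _, _, o, γ => (wkSemCx Γ o γ.1, wkSemTy A o γ.2)
  | .lock Γ, _, _, o, γ => ⟨(factor γ.2.2 o).1, wkSemCx Γ (factor γ.2.2 o).2.1 γ.2.1, (factor γ.2.2 o).2.2⟩

/-- Looking up a variable in an NbE environment. -/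
def lookup : {Γ : Cx} → {A : Ty} → Var Γ A → ∀ {Δ}, SemCx Γ Δ → SemTy A Δ
  | _, _, .zero, _, γ => γ.2
  | _, _, .succ v, _, γ => lookup v γ.1

/-- Trimming an NbE environment along the modal accessibility relation. -/
def trimSem : {Θ Γ : Cx} → Ext Θ Γ → ∀ {Δ}, SemCx Γ Δ → SemCx (.lock Θ) Δ
  | _, _, .nil, _, γ => γ
  | _, _, .var e, _, γ => trimSem e γ.1

/-- Evaluation of IKC terms in the NbE model. -/
def eval : {Γ : Cx} → {A : Ty} → Tm Γ A → ∀ Δ, SemCx Γ Δ → SemTy A Δ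
  | _, _, .var v, _, γ => lookup v γ
  | _, _, .lam t, _, γ => fun Γ' o a => eval t Γ' (wkSemCx _ o γ, a)
  | _, _, .app t u, Δ, γ => eval t Δ γ Δ (idOpe Δ) (eval u Δ γ)
  | _, _, .box t, _, γ => fun Γ' o Θ e => eval t Θ ⟨Γ', wkSemCx _ o γ, e⟩
  | _, _, .unbox t e, Δ, γ =>
    let d := trimSem e γ
    eval t d.1 d.2.1 d.1 (idOpe d.1) Δ d.2.2

mutual
/-- Embedding of normal forms into terms. -/
def embNf : {Γ : Cx} → {A : Ty} → Nf Γ A → Tm Γ A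
  | _, _, .up n => embNe n
  | _, _, .lam n => .lam (embNf n)
  | _, _, .box n => .box (embNf n)
/-- Embedding of neutral elements into terms. -/
def embNe : {Γ : Cx} → {A : Ty} → Ne Γ A → Tm Γ A
  | _, _, .var v => .var v
  | _, _, .app n m => .app (embNe n) (embNf m)
  | _, _, .unbox n e => .unbox (embNe n) e
end

/-- The logical relation between terms and values of the NbE model,
defined by induction on the type. -/
def LR : (A : Ty) → {Γ : Cx} → Tm Γ A → SemTy A Γ → Prop
  | .base, _, t, n => Conv t (embNe n)
  | .arr A B, Γ, t, f => ∀ (Γ' : Cx) (o : Ope Γ Γ') (u : Tm Γ' A) (a : SemTy A Γ'),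
      LR A u a → LR B (.app (wkTm o t) u) (f Γ' o a)
  | .box A, Γ, t, b => ∀ (Γ' : Cx) (o : Ope Γ Γ') (Δ : Cx) (e : Ext Γ' Δ),
      LR A (.unbox (wkTm o t) e) (b Γ' o Δ e)

/-- The logical relation between substitutions and NbE environments,
defined componentwise. -/
inductive LRSub : {Γ Δ : Cx} → Sub Γ Δ → SemCx Δ Γ → Prop
  | empty {Γ : Cx} : LRSub (Γ := Γ) .empty PUnit.unit
  | snoc {Γ Δ : Cx} {A : Ty} {s : Sub Γ Δ} {δ : SemCx Δ Γ} {t : Tm Γ A} {a : SemTy A Γ} :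
      LRSub s δ → LR A t a → LRSub (.snoc s t) (δ, a)
  | lock {Γ Θ Δ : Cx} {s : Sub Θ Δ} {δ : SemCx Δ Θ} (e : Ext Θ Γ) :
      LRSub s δ → LRSub (.lock s e) ⟨Θ, δ, e⟩

/-! ### Auxiliary lemmas for the fundamental theorem -/

theorem factor_drop {Δ Γ Γ' : Cx} {A : Ty} (e : Ext Δ Γ) (o : Ope Γ Γ') :
    factor e (Ope.drop (A := A) o) =
      ⟨(factor e o).1, (factor e o).2.1, .var (factor e o).2.2⟩ := by rw [factor]
theorem factor_keep {Δ Γ Γ' : Cx} {A : Ty} (e : Ext Δ Γ) (o : Ope Γ Γ') :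
    factor (Ext.var (A := A) e) (Ope.keep o) =
      ⟨(factor e o).1, (factor e o).2.1, .var (factor e o).2.2⟩ := by rw [factor]
theorem factor_keepLock {Γ Γ' : Cx} (o : Ope Γ Γ') :
    factor Ext.nil (Ope.keepLock o) = ⟨Γ', o, .nil⟩ := by rw [factor]

theorem trimSub_lock {Γ Δ Θ : Cx} (s : Sub Θ Δ) (e : Ext Θ Γ) :
    trimSub (Sub.lock s e) .nil = ⟨Θ, s, e⟩ := by rw [trimSub]
theorem trimSub_snoc {Γ Δ Θ : Cx} {A : Ty} (s : Sub Γ Δ) (t : Tm Γ A) (e : Ext Θ Δ) :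
    trimSub (Sub.snoc s t) (.var e) = trimSub s e := by rw [trimSub]

theorem compOpe_idOpe : {Γ Γ' : Cx} → (o : Ope Γ Γ') → compOpe o (idOpe Γ') = o
  | _, _, .base => rfl
  | _, _, .drop o => by simp only [idOpe, compOpe]; rw [compOpe_idOpe o]
  | _, _, .keep o => by simp only [idOpe, compOpe]; rw [compOpe_idOpe o]
  | _, _, .keepLock o => by simp only [idOpe, compOpe]; rw [compOpe_idOpe o]

theorem idOpe_compOpe : {Γ Γ' : Cx} → (o : Ope Γ Γ') → compOpe (idOpe Γ) o = o
  | _, _, .base => rfl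
  | _, _, .drop o => by simp only [compOpe]; rw [idOpe_compOpe o]
  | _, _, .keep o => by simp only [idOpe, compOpe]; rw [idOpe_compOpe o]
  | _, _, .keepLock o => by simp only [idOpe, compOpe]; rw [idOpe_compOpe o]

theorem factor_idOpe : {Δ Γ : Cx} → (e : Ext Δ Γ) → factor e (idOpe Γ) = ⟨Δ, idOpe Δ, e⟩
  | _, _, .nil => by simp only [idOpe]; rw [factor_keepLock]
  | _, _, .var e => by simp only [idOpe]; rw [factor_keep e (idOpe _), factor_idOpe e]

theorem wkVar_idOpe : {Γ : Cx} → {A : Ty} → (v : Var Γ A) → wkVar (idOpe Γ) v = v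
  | _, _, .zero => rfl
  | _, _, .succ v => by simp only [idOpe, wkVar]; rw [wkVar_idOpe v]

theorem wkTm_idOpe : {Γ : Cx} → {A : Ty} → (t : Tm Γ A) → wkTm (idOpe Γ) t = t
  | _, _, .var v => by simp only [wkTm]; rw [wkVar_idOpe v]
  | _, _, .lam t => by simp only [wkTm]; exact congrArg Tm.lam (wkTm_idOpe t)
  | _, _, .app t u => by simp only [wkTm]; rw [wkTm_idOpe t, wkTm_idOpe u]
  | _, _, .box t => by simp only [wkTm]; exact congrArg Tm.box (wkTm_idOpe t)
  | _, _, .unbox t e => by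
      simp only [wkTm]
      rw [factor_idOpe e]
      exact congrArg (fun x => Tm.unbox x e) (wkTm_idOpe t)

theorem wkSub_idOpe : {Γ Δ : Cx} → (s : Sub Γ Δ) → wkSub (idOpe Γ) s = s
  | _, _, .empty => rfl
  | _, _, .snoc s t => by simp only [wkSub]; rw [wkSub_idOpe s, wkTm_idOpe t]
  | _, _, .lock s e => by
      simp only [wkSub]
      rw [factor_idOpe e]
      exact congrArg (fun x => Sub.lock x e) (wkSub_idOpe s)

theorem factor_compOpe : {Δ Γ Γ' Γ'' : Cx} → (e : Ext Δ Γ) → (o : Ope Γ Γ') → (o' : Ope Γ' Γ'') →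
    factor e (compOpe o o') = ⟨(factor (factor e o).2.2 o').1,
      compOpe (factor e o).2.1 (factor (factor e o).2.2 o').2.1,
      (factor (factor e o).2.2 o').2.2⟩
  | _, _, _, _, e, o, .drop o' => by
      simp only [compOpe]
      rw [factor_drop e (compOpe o o'), factor_compOpe e o o', factor_drop (factor e o).2.2 o']
  | _, _, _, _, e, .drop o, .keep o' => by
      simp only [compOpe]
      rw [factor_drop e (compOpe o o'), factor_compOpe e o o', factor_drop e o,
        factor_keep (factor e o).2.2 o']
  | _, _, _, _, .var e, .keep o, .keep o' => by
      simp only [compOpe]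
      rw [factor_keep e (compOpe o o'), factor_compOpe e o o', factor_keep e o,
        factor_keep (factor e o).2.2 o']
  | _, _, _, _, .nil, .keepLock o, .keepLock o' => by
      simp only [compOpe]
      rw [factor_keepLock (compOpe o o'), factor_keepLock o, factor_keepLock o']
  | _, _, _, _, e, .base, .base => nomatch e

theorem wkVar_compOpe : {Γ Γ' Γ'' : Cx} → {A : Ty} → (v : Var Γ A) → (o : Ope Γ Γ') →
    (o' : Ope Γ' Γ'') → wkVar o' (wkVar o v) = wkVar (compOpe o o') v
  | _, _, _, _, v, o, .drop o' => by
      simp only [compOpe, wkVar]; rw [wkVar_compOpe v o o']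
  | _, _, _, _, v, .drop o, .keep o' => by
      simp only [compOpe, wkVar]; rw [wkVar_compOpe v o o']
  | _, _, _, _, .zero, .keep o, .keep o' => by simp only [compOpe, wkVar]
  | _, _, _, _, .succ v, .keep o, .keep o' => by
      simp only [compOpe, wkVar]; rw [wkVar_compOpe v o o']
  | _, _, _, _, v, .base, .base => nomatch v
  | _, _, _, _, v, .keepLock o, .keepLock o' => nomatch v

theorem wkTm_compOpe : {Γ Γ' Γ'' : Cx} → {A : Ty} → (t : Tm Γ A) → (o : Ope Γ Γ') →
    (o' : Ope Γ' Γ'') → wkTm o' (wkTm o t) = wkTm (compOpe o o') t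
  | _, _, _, _, .var v, o, o' => by simp only [wkTm]; rw [wkVar_compOpe v o o']
  | _, _, _, _, .lam t, o, o' => by
      simp only [wkTm, compOpe]; exact congrArg Tm.lam (wkTm_compOpe t (.keep o) (.keep o'))
  | _, _, _, _, .app t u, o, o' => by
      simp only [wkTm]; rw [wkTm_compOpe t o o', wkTm_compOpe u o o']
  | _, _, _, _, .box t, o, o' => by
      simp only [wkTm, compOpe]; exact congrArg Tm.box (wkTm_compOpe t (.keepLock o) (.keepLock o'))
  | _, _, _, _, .unbox t e, o, o' => by
      simp only [wkTm]
      rw [wkTm_compOpe t (factor e o).2.1 (factor (factor e o).2.2 o').2.1, factor_compOpe e o o']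

theorem wkSub_compOpe : {Γ Γ' Γ'' Δ : Cx} → (s : Sub Γ Δ) → (o : Ope Γ Γ') → (o' : Ope Γ' Γ'') →
    wkSub o' (wkSub o s) = wkSub (compOpe o o') s
  | _, _, _, _, .empty, o, o' => rfl
  | _, _, _, _, .snoc s t, o, o' => by
      simp only [wkSub]; rw [wkSub_compOpe s o o', wkTm_compOpe t o o']
  | _, _, _, _, .lock s e, o, o' => by
      simp only [wkSub]
      rw [wkSub_compOpe s (factor e o).2.1 (factor (factor e o).2.2 o').2.1, factor_compOpe e o o']

theorem factorOpe_comm : {Δ Γ Γ' : Cx} → (e : Ext Δ Γ) → (o : Ope Γ Γ') →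
    compOpe (.keepLock (factor e o).2.1) (factorOpe (factor e o).2.2) = compOpe (factorOpe e) o
  | _, _, _, e, .drop o => by
      rw [factor_drop]
      simp only [factorOpe, compOpe]
      rw [factorOpe_comm e o]
  | _, _, _, .var e, .keep o => by
      rw [factor_keep]
      simp only [factorOpe, compOpe]
      rw [factorOpe_comm e o]
  | _, _, _, .nil, .keepLock o => by
      rw [factor_keepLock]
      simp only [factorOpe, idOpe, compOpe]
      rw [compOpe_idOpe, idOpe_compOpe]

theorem factor_nil_comp : {Δ Γ Γ' : Cx} → (o : Ope Γ Γ') → (e : Ext Γ' Δ) →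
    factor (.nil : Ext Γ (.lock Γ)) (compOpe (.keepLock o) (factorOpe e)) = ⟨Γ', o, e⟩
  | _, _, _, o, .nil => by
      simp only [factorOpe, idOpe, compOpe, factor_keepLock]
      rw [compOpe_idOpe]
  | _, _, _, o, .var e => by
      simp only [factorOpe, compOpe, factor_drop]
      rw [factor_nil_comp o e]

/-- Selection of a substitution along an OPE. -/
def sel : {Θ Δ Γ : Cx} → Ope Θ Δ → Sub Γ Δ → Sub Γ Θ
  | _, _, _, .base, .empty => .empty
  | _, _, _, .drop o, .snoc s _ => sel o s
  | _, _, _, .keep o, .snoc s t => .snoc (sel o s) t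
  | _, _, _, .keepLock o, .lock s e => .lock (sel o s) e

/-- Composition of substitutions. -/
def compSub : {Γ Δ Θ : Cx} → Sub Γ Δ → Sub Δ Θ → Sub Γ Θ
  | _, _, _, _, .empty => .empty
  | _, _, _, s2, .snoc s1 t => .snoc (compSub s2 s1) (subst s2 t)
  | _, _, _, s2, .lock s1 e => .lock (compSub (trimSub s2 e).2.1 s1) (trimSub s2 e).2.2

theorem substVar_sel : {Θ Δ Γ : Cx} → {A : Ty} → (o : Ope Θ Δ) → (s : Sub Γ Δ) → (v : Var Θ A) →
    substVar (sel o s) v = substVar s (wkVar o v)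
  | _, _, _, _, .drop o, .snoc s t, v => by
      simp only [sel, wkVar, substVar]; rw [substVar_sel o s v]
  | _, _, _, _, .keep o, .snoc s t, .zero => by simp only [sel, wkVar, substVar]
  | _, _, _, _, .keep o, .snoc s t, .succ v => by
      simp only [sel, wkVar, substVar]; rw [substVar_sel o s v]

theorem trimSub_sel : {Θ Θ' Δ Γ : Cx} → (o : Ope Θ Δ) → (s : Sub Γ Δ) → (e : Ext Θ' Θ) →
    trimSub (sel o s) e = ⟨(trimSub s (factor e o).2.2).1,
      sel (factor e o).2.1 (trimSub s (factor e o).2.2).2.1,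
      (trimSub s (factor e o).2.2).2.2⟩
  | _, _, _, _, .drop o, .snoc s t, e => by
      simp only [sel]
      rw [trimSub_sel o s e, factor_drop e o]
      dsimp only
      rw [trimSub_snoc s t (factor e o).2.2]
  | _, _, _, _, .keep o, .snoc s t, .var e => by
      simp only [sel]
      rw [trimSub_snoc (sel o s) t e, trimSub_sel o s e, factor_keep e o]
      dsimp only
      rw [trimSub_snoc s t (factor e o).2.2]
  | _, _, _, _, .keepLock o, .lock s e0, .nil => by
      simp only [sel]
      rw [trimSub_lock (sel o s) e0, factor_keepLock o]
      dsimp only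
      rw [trimSub_lock s e0]

theorem sel_wkSub : {Θ Δ Γ Γ' : Cx} → (o : Ope Θ Δ) → (p : Ope Γ Γ') → (s : Sub Γ Δ) →
    sel o (wkSub p s) = wkSub p (sel o s)
  | _, _, _, _, .base, p, .empty => rfl
  | _, _, _, _, .drop o, p, .snoc s t => by
      simp only [sel, wkSub]; rw [sel_wkSub o p s]
  | _, _, _, _, .keep o, p, .snoc s t => by
      simp only [sel, wkSub]; rw [sel_wkSub o p s]
  | _, _, _, _, .keepLock o, p, .lock s e => by
      simp only [sel, wkSub]; rw [sel_wkSub o _ s]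

theorem subst_wkTm : {Θ Δ Γ : Cx} → {A : Ty} → (s : Sub Γ Δ) → (o : Ope Θ Δ) → (t : Tm Θ A) →
    subst s (wkTm o t) = subst (sel o s) t
  | _, _, _, _, s, o, .var v => by simp only [wkTm, subst]; rw [substVar_sel o s v]
  | _, _, _, _, s, o, .lam t => by
      simp only [wkTm, subst, sel]
      rw [subst_wkTm _ (.keep o) t]
      simp only [sel]
      rw [sel_wkSub]
  | _, _, _, _, s, o, .app t u => by
      simp only [wkTm, subst]; rw [subst_wkTm s o t, subst_wkTm s o u]
  | _, _, _, _, s, o, .box t => by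
      simp only [wkTm, subst]
      rw [subst_wkTm _ (.keepLock o) t]
      simp only [sel]
  | _, _, _, _, s, o, .unbox t e => by
      simp only [wkTm, subst]
      rw [subst_wkTm _ (factor e o).2.1 t, trimSub_sel o s e]

theorem substVar_wkSub : {Γ Γ' Δ : Cx} → {A : Ty} → (o : Ope Γ Γ') → (s : Sub Γ Δ) →
    (v : Var Δ A) → substVar (wkSub o s) v = wkTm o (substVar s v)
  | _, _, _, _, o, .snoc s t, .zero => rfl
  | _, _, _, _, o, .snoc s t, .succ v => by
      simp only [wkSub, substVar]; rw [substVar_wkSub o s v]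

theorem trimSub_wkSub : {Γ Γ' Δ Θ : Cx} → (o : Ope Γ Γ') → (s : Sub Γ Δ) → (e : Ext Θ Δ) →
    trimSub (wkSub o s) e = ⟨(factor (trimSub s e).2.2 o).1,
      wkSub (factor (trimSub s e).2.2 o).2.1 (trimSub s e).2.1,
      (factor (trimSub s e).2.2 o).2.2⟩
  | _, _, _, _, o, .lock s e0, .nil => by simp only [wkSub, trimSub]; rw [trimSub_lock]
  | _, _, _, _, o, .snoc s t, .var e => by
      simp only [wkSub, trimSub]; rw [trimSub_wkSub o s e, trimSub_snoc]

theorem wkTm_subst : {Γ Γ' Δ : Cx} → {A : Ty} → (o : Ope Γ Γ') → (s : Sub Γ Δ) → (t : Tm Δ A) →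
    wkTm o (subst s t) = subst (wkSub o s) t
  | _, _, _, _, o, s, .var v => by simp only [subst]; rw [substVar_wkSub o s v]
  | _, _, _, _, o, s, .lam t => by
      simp only [subst, wkTm]
      rw [wkTm_subst (.keep o) _ t]
      simp only [wkSub, wkTm, wkVar]
      rw [wkSub_compOpe s (.drop (idOpe _)) (.keep o), wkSub_compOpe s o (.drop (idOpe _))]
      simp only [compOpe]
      rw [idOpe_compOpe, compOpe_idOpe]
  | _, _, _, _, o, s, .app t u => by
      simp only [subst, wkTm]; rw [wkTm_subst o s t, wkTm_subst o s u]
  | _, _, _, _, o, s, .box t => by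
      simp only [subst, wkTm]
      rw [wkTm_subst (.keepLock o) _ t]
      simp only [wkSub]
      rw [factor_keepLock o]
  | _, _, _, _, o, s, .unbox t e => by
      simp only [subst, wkTm]
      rw [wkTm_subst (factor (trimSub s e).2.2 o).2.1 (trimSub s e).2.1 t, trimSub_wkSub o s e]

theorem substVar_idSub : {Γ : Cx} → {A : Ty} → (v : Var Γ A) → substVar (idSub Γ) v = .var v
  | _, _, .zero => rfl
  | _, _, .succ v => by
      simp only [idSub, substVar]
      rw [substVar_wkSub, substVar_idSub v]
      simp only [wkTm, wkVar]
      rw [wkVar_idOpe]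

theorem trimSub_idSub : {Γ Θ : Cx} → (e : Ext Θ Γ) → trimSub (idSub Γ) e = ⟨Θ, idSub Θ, e⟩
  | _, _, .nil => rfl
  | _, _, .var e => by
      simp only [idSub]
      rw [trimSub_snoc, trimSub_wkSub, trimSub_idSub e]
      dsimp only
      rw [factor_drop e (idOpe _), factor_idOpe e]
      dsimp only
      rw [wkSub_idOpe]

theorem subst_idSub : {Γ : Cx} → {A : Ty} → (t : Tm Γ A) → subst (idSub Γ) t = t
  | _, _, .var v => by simp only [subst]; rw [substVar_idSub v]
  | _, _, .lam t => by simp only [subst]; exact congrArg Tm.lam (subst_idSub t)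
  | _, _, .app t u => by simp only [subst]; rw [subst_idSub t, subst_idSub u]
  | _, _, .box t => by simp only [subst]; exact congrArg Tm.box (subst_idSub t)
  | _, _, .unbox t e => by
      simp only [subst]
      rw [trimSub_idSub e]
      exact congrArg (fun x => Tm.unbox x e) (subst_idSub t)

theorem compSub_selId : {Γ Γ' Δ : Cx} → (o : Ope Γ Γ') → (s : Sub Γ Δ) →
    compSub (sel o (idSub Γ')) s = wkSub o s
  | _, _, _, o, .empty => rfl
  | _, _, _, o, .snoc s t => by
      simp only [compSub, wkSub]
      rw [compSub_selId o s, ← subst_wkTm, subst_idSub]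
  | _, _, _, o, .lock s e => by
      simp only [compSub, wkSub]
      rw [trimSub_sel, trimSub_idSub]
      exact congrArg (fun x => Sub.lock x (factor e o).2.2) (compSub_selId (factor e o).2.1 s)

theorem substVar_compSub : {Γ Δ Θ : Cx} → {A : Ty} → (s2 : Sub Γ Δ) → (s1 : Sub Δ Θ) →
    (v : Var Θ A) → substVar (compSub s2 s1) v = subst s2 (substVar s1 v)
  | _, _, _, _, s2, .snoc s1 t, .zero => rfl
  | _, _, _, _, s2, .snoc s1 t, .succ v => by
      simp only [compSub, substVar]; rw [substVar_compSub s2 s1 v]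

theorem trimSub_compSub : {Γ Δ Θ Θ' : Cx} → (s2 : Sub Γ Δ) → (s1 : Sub Δ Θ) → (e : Ext Θ' Θ) →
    trimSub (compSub s2 s1) e = ⟨(trimSub s2 (trimSub s1 e).2.2).1,
      compSub (trimSub s2 (trimSub s1 e).2.2).2.1 (trimSub s1 e).2.1,
      (trimSub s2 (trimSub s1 e).2.2).2.2⟩
  | _, _, _, _, s2, .lock s1 e0, .nil => by simp only [compSub, trimSub]; rw [trimSub_lock]
  | _, _, _, _, s2, .snoc s1 t, .var e => by
      simp only [compSub, trimSub]; rw [trimSub_compSub s2 s1 e, trimSub_snoc]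

theorem compSub_wkSub : {Γ Δ Δ' Θ : Cx} → (s2 : Sub Γ Δ') → (o : Ope Δ Δ') → (s1 : Sub Δ Θ) →
    compSub s2 (wkSub o s1) = compSub (sel o s2) s1
  | _, _, _, _, s2, o, .empty => rfl
  | _, _, _, _, s2, o, .snoc s1 t => by
      simp only [compSub, wkSub]
      rw [compSub_wkSub s2 o s1, subst_wkTm]
  | _, _, _, _, s2, o, .lock s1 e => by
      simp only [compSub, wkSub]
      rw [trimSub_sel o s2 e]
      exact congrArg (fun x => Sub.lock x _) (compSub_wkSub _ (factor e o).2.1 s1)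

theorem wkSub_compSub : {Γ Γ' Δ Θ : Cx} → (o : Ope Γ Γ') → (s2 : Sub Γ Δ) → (s1 : Sub Δ Θ) →
    compSub (wkSub o s2) s1 = wkSub o (compSub s2 s1)
  | _, _, _, _, o, s2, .empty => rfl
  | _, _, _, _, o, s2, .snoc s1 t => by
      simp only [compSub, wkSub]
      rw [wkSub_compSub o s2 s1, wkTm_subst]
  | _, _, _, _, o, s2, .lock s1 e => by
      simp only [compSub, wkSub]
      rw [trimSub_wkSub o s2 e]
      exact congrArg (fun x => Sub.lock x _)
        (wkSub_compSub (factor (trimSub s2 e).2.2 o).2.1 (trimSub s2 e).2.1 s1)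

theorem sel_idOpe : {Γ Δ : Cx} → (s : Sub Γ Δ) → sel (idOpe Δ) s = s
  | _, _, .empty => rfl
  | _, _, .snoc s t => by simp only [idOpe, sel]; rw [sel_idOpe s]
  | _, _, .lock s e => by simp only [idOpe, sel]; rw [sel_idOpe s]

theorem subst_subst : {Γ Δ Θ : Cx} → {A : Ty} → (s2 : Sub Γ Δ) → (s1 : Sub Δ Θ) → (t : Tm Θ A) →
    subst s2 (subst s1 t) = subst (compSub s2 s1) t
  | _, _, _, _, s2, s1, .var v => by simp only [subst]; rw [substVar_compSub s2 s1 v]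
  | _, _, _, _, s2, s1, .lam t => by
      simp only [subst]
      rw [subst_subst _ _ t]
      simp only [compSub, subst, substVar]
      rw [compSub_wkSub]
      simp only [sel]
      rw [sel_idOpe, wkSub_compSub]
  | _, _, _, _, s2, s1, .app t u => by
      simp only [subst]; rw [subst_subst s2 s1 t, subst_subst s2 s1 u]
  | _, _, _, _, s2, s1, .box t => by
      simp only [subst]
      rw [subst_subst _ _ t]
      simp only [compSub]
      rw [trimSub_lock s2 Ext.nil]
  | _, _, _, _, s2, s1, .unbox t e => by
      simp only [subst]
      rw [subst_subst _ _ t, trimSub_compSub s2 s1 e]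

theorem sel_idSub : {Γ Γ' : Cx} → (o : Ope Γ Γ') → sel o (idSub Γ') = wkSub o (idSub Γ)
  | _, _, .base => rfl
  | _, _, .drop o => by
      simp only [idSub, sel]
      rw [sel_wkSub, sel_idSub o, wkSub_compOpe]
      simp only [compOpe]
      rw [compOpe_idOpe]
  | _, _, .keep o => by
      simp only [idSub, sel, wkSub, wkTm, wkVar]
      rw [sel_wkSub, sel_idSub o, wkSub_compOpe, wkSub_compOpe]
      simp only [compOpe]
      rw [idOpe_compOpe, compOpe_idOpe]
  | _, _, .keepLock o => by
      simp only [idSub, sel, wkSub]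
      rw [factor_keepLock o]
      dsimp only
      rw [sel_idSub o]

mutual
theorem wkTm_embNf : {Γ Γ' : Cx} → {A : Ty} → (o : Ope Γ Γ') → (n : Nf Γ A) →
    wkTm o (embNf n) = embNf (wkNf o n)
  | _, _, _, o, .up n => by simp only [embNf, wkNf]; rw [wkTm_embNe o n]
  | _, _, _, o, .lam n => by simp only [embNf, wkNf, wkTm]; rw [wkTm_embNf (.keep o) n]
  | _, _, _, o, .box n => by simp only [embNf, wkNf, wkTm]; rw [wkTm_embNf (.keepLock o) n]
theorem wkTm_embNe : {Γ Γ' : Cx} → {A : Ty} → (o : Ope Γ Γ') → (n : Ne Γ A) →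
    wkTm o (embNe n) = embNe (wkNe o n)
  | _, _, _, o, .var v => by simp only [embNe, wkNe, wkTm]
  | _, _, _, o, .app n m => by
      simp only [embNe, wkNe, wkTm]; rw [wkTm_embNe o n, wkTm_embNf o m]
  | _, _, _, o, .unbox n e => by
      simp only [embNe, wkNe, wkTm]; rw [wkTm_embNe (factor e o).2.1 n]
end

theorem convWk {Γ : Cx} {A : Ty} {t u : Tm Γ A} (h : Conv t u) :
    ∀ {Γ' : Cx} (o : Ope Γ Γ'), Conv (wkTm o t) (wkTm o u) := by
  induction h with
  | refl t => intro Γ' o; exact .refl _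
  | symm _ ih => intro Γ' o; exact .symm (ih o)
  | trans _ _ ih1 ih2 => intro Γ' o; exact .trans (ih1 o) (ih2 o)
  | congLam _ ih => intro Γ' o; simp only [wkTm]; exact .congLam (ih (.keep o))
  | congApp _ _ ih1 ih2 => intro Γ' o; simp only [wkTm]; exact .congApp (ih1 o) (ih2 o)
  | congBox _ ih => intro Γ' o; simp only [wkTm]; exact .congBox (ih (.keepLock o))
  | congUnbox _ ih => intro Γ' o; simp only [wkTm]; exact .congUnbox (ih _)
  | betaFun t u =>
      intro Γ' o
      have hb := Conv.betaFun (wkTm (.keep o) t) (wkTm o u)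
      rw [subst_wkTm] at hb
      simp only [sel] at hb
      rw [sel_idSub] at hb
      simp only [wkTm]
      rw [wkTm_subst]
      simp only [wkSub]
      exact hb
  | etaFun t =>
      intro Γ' o
      have hb := Conv.etaFun (wkTm o t)
      rw [wkTm_compOpe] at hb
      simp only [compOpe] at hb
      rw [compOpe_idOpe] at hb
      simp only [wkTm, wkVar]
      rw [wkTm_compOpe]
      simp only [compOpe]
      rw [idOpe_compOpe]
      exact hb
  | betaBox t e =>
      intro Γ' o
      simp only [wkTm]
      rw [wkTm_compOpe t (factorOpe e) o, ← factorOpe_comm e o, ← wkTm_compOpe]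
      exact Conv.betaBox _ _
  | etaBox t =>
      intro Γ' o
      simp only [wkTm]
      rw [factor_keepLock o]
      exact Conv.etaBox _

theorem lrConv : {A : Ty} → {Γ : Cx} → {t t' : Tm Γ A} → {a : SemTy A Γ} →
    Conv t t' → LR A t a → LR A t' a
  | .base, _, _, _, _, hc, h => Conv.trans (Conv.symm hc) h
  | .arr A B, _, _, _, _, hc, h => fun Γ' o u a ha =>
      lrConv (Conv.congApp (convWk hc o) (Conv.refl u)) (h Γ' o u a ha)
  | .box A, _, _, _, _, hc, h => fun Γ' o Δ e =>
      lrConv (Conv.congUnbox (convWk hc o)) (h Γ' o Δ e)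

theorem lrWk : {A : Ty} → {Γ Γ' : Cx} → (o : Ope Γ Γ') → {t : Tm Γ A} → {a : SemTy A Γ} →
    LR A t a → LR A (wkTm o t) (wkSemTy A o a)
  | .base, _, _, o, t, n, h => by
      have := convWk (t := t) (u := embNe n) h o
      have h2 : wkTm o (embNe n) = embNe (wkNe o n) := wkTm_embNe o n
      show Conv (wkTm o t) (embNe (wkNe o n))
      exact h2 ▸ this
  | .arr A B, _, _, o, t, f, h => fun Γ'' o' u a ha => by
      have := h Γ'' (compOpe o o') u a ha
      rwa [← wkTm_compOpe] at this
  | .box A, _, _, o, t, b, h => fun Γ'' o' Δ e => by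
      have := h Γ'' (compOpe o o') Δ e
      rwa [← wkTm_compOpe] at this

theorem lrSubWk {Δ Γ : Cx} {s : Sub Γ Δ} {δ : SemCx Δ Γ} (h : LRSub s δ) :
    ∀ {Γ' : Cx} (o : Ope Γ Γ'), LRSub (wkSub o s) (wkSemCx Δ o δ)  := by
  induction h with
  | empty => intro Γ' o; simp only [wkSub, wkSemCx]; exact .empty
  | snoc _ ht ih => intro Γ' o; simp only [wkSub, wkSemCx]; exact .snoc (ih o) (lrWk o ht)
  | lock e _ ih => intro Γ' o; simp only [wkSub, wkSemCx]; exact .lock _ (ih (factor e o).2.1)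

theorem lrLookup : {Δ : Cx} → {A : Ty} → (v : Var Δ A) → {Γ : Cx} → {s : Sub Γ Δ} →
    {δ : SemCx Δ Γ} → LRSub s δ → LR A (substVar s v) (lookup v δ)
  | _, _, .zero, _, _, _, h => by
      cases h with | snoc hs ht => simp only [substVar, lookup]; exact ht
  | _, _, .succ v, _, _, _, h => by
      cases h with | snoc hs ht => simp only [substVar, lookup]; exact lrLookup v hs

theorem lrTrim : {Θ Δ : Cx} → (e : Ext Θ Δ) → {Γ : Cx} → {s : Sub Γ Δ} → {δ : SemCx Δ Γ} →
    LRSub s δ → LRSub (Sub.lock (trimSub s e).2.1 (trimSub s e).2.2) (trimSem e δ)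
  | _, _, .nil, _, _, _, h => by
      cases h with | lock e hs =>
        rw [trimSub_lock]
        simp only [trimSem]
        exact .lock _ hs
  | _, _, .var e, _, _, _, h => by
      cases h with | snoc hs ht =>
        rw [trimSub_snoc]
        simp only [trimSem]
        exact lrTrim e hs

theorem fundamental_aux : {Δ : Cx} → {A : Ty} → (t : Tm Δ A) → {Γ : Cx} → (s : Sub Γ Δ) →
    (δ : SemCx Δ Γ) → LRSub s δ → LR A (subst s t) (eval t Γ δ)
  | _, _, .var v, _, s, δ, h => by simp only [subst, eval]; exact lrLookup v h
  | _, _, .lam t, _, s, δ, h => fun Γ' o u a ha => by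
      simp only [eval]
      have hu := fundamental_aux t (.snoc (wkSub o s) u) (wkSemCx _ o δ, a)
        (.snoc (lrSubWk h o) ha)
      refine lrConv ?_ hu
      have hb := Conv.betaFun
        (subst (.snoc (wkSub (.drop (idOpe Γ')) (wkSub o s)) (.var .zero)) t) u
      rw [subst_subst] at hb
      simp only [compSub, subst, substVar] at hb
      rw [compSub_wkSub] at hb
      simp only [sel] at hb
      rw [sel_idOpe, compSub_wkSub, compSub_selId] at hb
      rw [wkTm_subst]
      simp only [subst]
      exact Conv.symm hb
  | _, _, .app t u, _, s, δ, h => by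
      simp only [subst, eval]
      have h1 := fundamental_aux t s δ h
      have h2 := fundamental_aux u s δ h
      have := h1 _ (idOpe _) _ _ h2
      rwa [wkTm_idOpe] at this
  | _, _, .box t, _, s, δ, h => fun Γ' o Δ' e => by
      simp only [eval]
      have hu := fundamental_aux t (.lock (wkSub o s) e) ⟨Γ', wkSemCx _ o δ, e⟩
        (.lock e (lrSubWk h o))
      refine lrConv ?_ hu
      simp only [subst, wkTm]
      refine Conv.symm (Conv.trans (Conv.betaBox _ e) ?_)
      rw [wkTm_compOpe, wkTm_subst]
      simp only [wkSub]
      rw [factor_nil_comp]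
      exact Conv.refl _
  | _, _, .unbox t e, _, s, δ, h => by
      simp only [subst, eval]
      have h' := lrTrim e h
      revert h'
      generalize trimSem e δ = D
      intro h'
      cases h' with
      | lock e' hs' =>
        have := fundamental_aux t _ _ hs' _ (idOpe _) _ (trimSub s e).2.2
        rwa [wkTm_idOpe] at this

/-- Fundamental theorem of the logical relations for IKC: if a substitution s
and an environment δ are related, then the substituted term subst s t and the
value ⟦t⟧ δ are related. -/
theorem fundamental {Δ Γ : Cx} {A : Ty} (t : Tm Δ A) (s : Sub Γ Δ) (δ : SemCx Δ Γ)
    (h : LRSub s δ) : LR A (subst s t) (eval t Γ δ) :=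
  fundamental_aux t s δ h

end IKC
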